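/- For any real a > 0 and positive integer n, ∑_{k=1}^{n} ψ₀(k+a)³ = −(1/2)ψ₁(a+n+1) + (1/2)ψ₁(a+1) + (a+n)ψ₀(a+n+1)³ − (3/2)(2a+2n+1)ψ₀(a+n+1)² + 3(2a+2n+1)ψ₀(a+n+1) − aψ₀(a+1)³ + (3/2)(2a+1)ψ₀(a+1)² − 3(2a+1)ψ₀(a+1) − 6n. -/

import Mathlib

open Finset

/-- The `m`-th polygamma function: the `(m+1)`-th derivative of `log ∘ Γ`. -/
noncomputable def psi (m : ℕ) (x : ℝ) : ℝ :=
  iteratedDeriv (m + 1) (fun y => Real.log (Real.Gamma y)) x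

open Topology in
lemma logGamma_analyticAt {x : ℝ} (hx : 0 < x) :
    AnalyticAt ℝ (fun y => Real.log (Real.Gamma y)) x := by
  have hG : AnalyticAt ℂ Complex.Gamma (x : ℂ) := by
    have : AnalyticOnNhd ℂ Complex.Gamma {s : ℂ | 0 < s.re} := by
      refine DifferentiableOn.analyticOnNhd (fun s hs => ?_)
        (isOpen_lt continuous_const Complex.continuous_re)
      refine (Complex.differentiableAt_Gamma s (fun m => ?_)).differentiableWithinAt
      intro h
      rw [h] at hs
      simp only [Set.mem_setOf_eq, Complex.neg_re, Complex.natCast_re] at hs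
      have : (0:ℝ) ≤ (m:ℝ) := m.cast_nonneg
      linarith
    exact this x (by simpa using hx)
  have hlog : AnalyticAt ℂ (fun z => Complex.log (Complex.Gamma z)) (x : ℂ) := by
    refine hG.clog ?_
    rw [Complex.Gamma_ofReal]
    exact Complex.ofReal_mem_slitPlane.2 (Real.Gamma_pos_of_pos hx)
  have hg : AnalyticAt ℝ (fun y : ℝ => (Complex.log (Complex.Gamma (y : ℂ))).re) x := by
    exact (Complex.reCLM.analyticAt _).comp
      ((hlog.restrictScalars.comp (Complex.ofRealCLM.analyticAt x)))
  refine hg.congr ?_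
  have hmem : Set.Ioi (0:ℝ) ∈ 𝓝 x := Ioi_mem_nhds hx
  filter_upwards [hmem] with y hy
  rw [Complex.Gamma_ofReal, ← Complex.ofReal_log (Real.Gamma_pos_of_pos hy).le,
    Complex.ofReal_re]

open Topology in
lemma log_analyticAt {x : ℝ} (hx : 0 < x) : AnalyticAt ℝ Real.log x := by
  have hg : AnalyticAt ℝ (fun y : ℝ => (Complex.log (y : ℂ)).re) x := by
    exact (Complex.reCLM.analyticAt _).comp
      (((analyticAt_clog (Complex.ofReal_mem_slitPlane.2 hx)).restrictScalars).comp
        (Complex.ofRealCLM.analyticAt x))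
  refine hg.congr ?_
  filter_upwards [Ioi_mem_nhds hx] with y hy
  rw [← Complex.ofReal_log hy.le, Complex.ofReal_re]

lemma iteratedDerivWithin_of_isOpen' (n : ℕ) {f : ℝ → ℝ} {s : Set ℝ} {x : ℝ}
    (hs : IsOpen s) (hx : x ∈ s) : iteratedDerivWithin n f s x = iteratedDeriv n f x := by
  simp only [iteratedDerivWithin, iteratedDeriv, iteratedFDerivWithin_of_isOpen n hs hx]

open Topology in
lemma psi_add_one (m : ℕ) {x : ℝ} (hx : 0 < x) :
    psi m (x + 1) = psi m x + iteratedDeriv (m + 1) Real.log x := by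
  set f : ℝ → ℝ := fun y => Real.log (Real.Gamma y) with hf
  have h1 : psi m (x + 1) = iteratedDeriv (m + 1) (fun z => f (z + 1)) x := by
    rw [psi, iteratedDeriv_comp_add_const (m + 1) f 1]
  have h2 : (fun z => f (z + 1)) =ᶠ[𝓝 x] (f + Real.log) := by
    filter_upwards [Ioi_mem_nhds hx] with y hy
    simp only [hf, Pi.add_apply]
    rw [Real.Gamma_add_one (ne_of_gt hy),
      Real.log_mul (ne_of_gt hy) (ne_of_gt (Real.Gamma_pos_of_pos hy)), add_comm]
  have hfc : ContDiffOn ℝ (↑(m+1)) f (Set.Ioi 0) :=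
    fun y hy => ((logGamma_analyticAt hy).contDiffAt).contDiffWithinAt.of_le le_top
  have hlc : ContDiffOn ℝ (↑(m+1)) Real.log (Set.Ioi 0) :=
    fun y hy => ((log_analyticAt hy).contDiffAt).contDiffWithinAt.of_le le_top
  rw [h1, h2.iteratedDeriv_eq (m+1),
    ← iteratedDerivWithin_of_isOpen' (m+1) isOpen_Ioi (Set.mem_Ioi.mpr hx),
    iteratedDerivWithin_add (Set.mem_Ioi.mpr hx) isOpen_Ioi.uniqueDiffOn (hfc x (Set.mem_Ioi.mpr hx))
      (hlc x (Set.mem_Ioi.mpr hx)),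
    iteratedDerivWithin_of_isOpen' (m+1) isOpen_Ioi (Set.mem_Ioi.mpr hx),
    iteratedDerivWithin_of_isOpen' (m+1) isOpen_Ioi (Set.mem_Ioi.mpr hx), psi]

lemma psi0_rec {x : ℝ} (hx : 0 < x) : psi 0 (x + 1) = psi 0 x + x⁻¹ := by
  rw [psi_add_one 0 hx]
  congr 1
  rw [show (0:ℕ)+1 = 1 from rfl, iteratedDeriv_one, Real.deriv_log]

lemma psi1_rec {x : ℝ} (hx : 0 < x) : psi 1 (x + 1) = psi 1 x - (x^2)⁻¹ := by
  rw [psi_add_one 1 hx, sub_eq_add_neg]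
  congr 1
  rw [show (1:ℕ)+1 = 2 from rfl, iteratedDeriv_succ, iteratedDeriv_one, Real.deriv_log']
  simp [deriv_inv]

theorem stmt_8 (a : ℝ) (ha : 0 < a) (n : ℕ) (hn : 0 < n) :
    ∑ k ∈ Icc 1 n, (psi 0 ((k : ℝ) + a))^3 =
      -(1/2) * psi 1 (a + n + 1) + (1/2) * psi 1 (a + 1) + (a + n) * (psi 0 (a + n + 1))^3 -
        (3/2) * (2*a + 2*n + 1) * (psi 0 (a + n + 1))^2 + 3 * (2*a + 2*n + 1) * psi 0 (a + n + 1) -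
        a * (psi 0 (a + 1))^3 + (3/2) * (2*a + 1) * (psi 0 (a + 1))^2 - 3 * (2*a + 1) * psi 0 (a + 1) - 6*n := by
  clear hn
  induction n with
  | zero => simp; ring
  | succ n ih =>
    rw [Finset.sum_Icc_succ_top (by omega : 1 ≤ n + 1), ih]
    have hc : (0:ℝ) < a + n + 1 := by positivity
    have e1 : a + (↑(n+1) : ℝ) + 1 = (a + n + 1) + 1 := by push_cast; ring
    have e2 : ((↑(n+1) : ℝ)) + a = a + n + 1 := by push_cast; ring
    rw [e1, e2, psi0_rec hc, psi1_rec hc]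
    have hc' : (a + n + 1) ≠ 0 := ne_of_gt hc
    push_cast
    field_simp
    ring
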